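/- Let a₁, a₂ be coprime positive integers and let a₃ be a positive integer coprime to a₁. Then the quotient ⟨a₁,a₂⟩/a₃ equals the set {x ∈ ℕ : [x·a₃·a₂⁻¹]_{a₁}·a₂ ≤ x·a₃}. -/

import Mathlib

/-- The numerical semigroup generated by `a` and `b`:
`⟨a,b⟩ = {λ₁a + λ₂b : λ₁, λ₂ ∈ ℕ}`. -/
def numSg (a b : ℕ) : Set ℕ := {x | ∃ p q : ℕ, x = p * a + q * b}

/-- `[m⁻¹]ₙ`: the representative in `[0,n)` of the inverse of `m` modulo `n`
(meaningful when `gcd m n = 1` and `n > 0`).  The remainder operator `[m]ₙ`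
is ordinary `m % n`. -/
noncomputable def modInv (m n : ℕ) : ℕ := ((m : ZMod n)⁻¹).val

/-- Let `a₁, a₂` be coprime positive integers and `a₃` a positive integer coprime
to `a₁`.  Then `⟨a₁,a₂⟩/a₃ = {x ∈ ℕ : [x·a₃·a₂⁻¹]_{a₁}·a₂ ≤ x·a₃}`. -/
theorem stmt2 (a₁ a₂ a₃ : ℕ) (ha₁ : 0 < a₁) (ha₂ : 0 < a₂) (ha₃ : 0 < a₃)
    (hco : Nat.Coprime a₁ a₂) (hco' : Nat.Coprime a₁ a₃) :
    {x : ℕ | a₃ * x ∈ numSg a₁ a₂} =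
      {x : ℕ | ((x * a₃ * modInv a₂ a₁) % a₁) * a₂ ≤ x * a₃} := by
  haveI : NeZero a₁ := ⟨ha₁.ne'⟩
  ext x
  simp only [Set.mem_setOf_eq, numSg]
  have hu : IsUnit (a₂ : ZMod a₁) := by
    rw [ZMod.isUnit_iff_coprime]; exact hco.symm
  have hinv : ((modInv a₂ a₁ : ℕ) : ZMod a₁) = (a₂ : ZMod a₁)⁻¹ := by
    simp [modInv, ZMod.natCast_val, ZMod.cast_id]
  set n := x * a₃ with hn
  set q := (n * modInv a₂ a₁) % a₁ with hq
  have hqval : q = (((n * modInv a₂ a₁ : ℕ) : ZMod a₁)).val := (ZMod.val_natCast _ _).symm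
  have hkey : ((q * a₂ : ℕ) : ZMod a₁) = (n : ZMod a₁) := by
    push_cast [hqval, ZMod.natCast_val, ZMod.cast_id, hinv]
    rw [mul_assoc, ZMod.inv_mul_of_unit _ hu, mul_one]
  constructor
  · rintro ⟨p, q', hpq⟩
    have hn' : n = p * a₁ + q' * a₂ := by rw [hn, Nat.mul_comm]; exact hpq
    have hcast : ((n * modInv a₂ a₁ : ℕ) : ZMod a₁) = (q' : ZMod a₁) := by
      push_cast [hinv, hn']
      simp [mul_assoc, ZMod.mul_inv_of_unit _ hu]
    have hqle : q ≤ q' := by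
      rw [hqval, hcast, ZMod.val_natCast]
      exact Nat.mod_le _ _
    calc q * a₂ ≤ q' * a₂ := Nat.mul_le_mul_right _ hqle
      _ ≤ n := by omega
  · intro hle
    have hmod : (q * a₂) % a₁ = n % a₁ := by
      rwa [ZMod.natCast_eq_natCast_iff, Nat.ModEq] at hkey
    obtain ⟨p, hp⟩ := (Nat.modEq_iff_dvd' hle).mp hmod
    exact ⟨p, q, by rw [Nat.mul_comm a₃ x, ← hn, Nat.mul_comm p a₁]; omega⟩
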